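/- If an n×n matrix A has entries a_{ij} = p_{min(i,j)} * q_{max(i,j)} for positive reals p_1,...,p_n, q_1,...,q_n satisfying p_1/q_1 ≤ p_2/q_2 ≤ ... ≤ p_n/q_n, then A is totally nonnegative. -/

import Mathlib

open Matrix

/-- Key lemma: the "min kernel" matrix has nonnegative determinant. -/
private lemma min_step (k : ℕ)
    (ih : ∀ x y : Fin k → ℝ, Monotone x → Monotone y → (∀ i, 0 ≤ x i) → (∀ i, 0 ≤ y i) →
      0 ≤ (Matrix.of fun i j => min (x i) (y j)).det)
    (x y : Fin (k + 1) → ℝ) (hx : Monotone x) (hy : Monotone y)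
    (hx0 : ∀ i, 0 ≤ x i) (hy0 : ∀ i, 0 ≤ y i) (h0 : x 0 ≤ y 0) :
    0 ≤ (Matrix.of fun i j => min (x i) (y j)).det := by
  set M : Matrix (Fin (k + 1)) (Fin (k + 1)) ℝ := Matrix.of fun i j => min (x i) (y j) with hM
  by_cases hA : ∃ i : Fin (k + 1), i ≠ 0 ∧ x i ≤ y 0
  · -- two rows proportional to the all ones row: determinant is 0
    obtain ⟨i, hi, hxi⟩ := hA
    set u : Fin (k + 1) → ℝ := fun _ => (1 : ℝ) with hu
    have hrow0 : M 0 = x 0 • u := by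
      funext j
      simp only [hM, Matrix.of_apply, hu, Pi.smul_apply, smul_eq_mul, mul_one]
      exact min_eq_left (h0.trans (hy (Fin.zero_le j)))
    have hrowi : M i = x i • u := by
      funext j
      simp only [hM, Matrix.of_apply, hu, Pi.smul_apply, smul_eq_mul, mul_one]
      exact min_eq_left (hxi.trans (hy (Fin.zero_le j)))
    set D : Matrix (Fin (k + 1)) (Fin (k + 1)) ℝ :=
      updateRow (updateRow M 0 u) i u with hD
    have hMeq : M = updateRow (updateRow D i (x i • u)) 0 (x 0 • u) := by
      ext a b
      rcases eq_or_ne a 0 with rfl | ha0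
      · rw [updateRow_self, ← hrow0]
      · rw [updateRow_ne ha0]
        rcases eq_or_ne a i with rfl | hai
        · rw [updateRow_self, ← hrowi]
        · rw [updateRow_ne hai, hD, updateRow_ne hai, updateRow_ne ha0]
    have hcomm : updateRow (updateRow D i (x i • u)) 0 u
        = updateRow (updateRow D 0 u) i (x i • u) := by
      ext a b
      rcases eq_or_ne a 0 with rfl | ha0
      · rw [updateRow_self, updateRow_ne (Ne.symm hi), updateRow_self]
      · rw [updateRow_ne ha0]
        rcases eq_or_ne a i with rfl | hai
        · rw [updateRow_self, updateRow_self]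
        · rw [updateRow_ne hai, updateRow_ne hai, updateRow_ne ha0]
    have hzero : (updateRow (updateRow D 0 u) i (x i • u)).det = 0 := by
      have h1 : det (updateRow (updateRow D 0 u) i (x i • u))
          = x i * det (updateRow (updateRow D 0 u) i u) := det_updateRow_smul _ _ _ _
      have h2 : det (updateRow (updateRow D 0 u) i u) = 0 := by
        apply det_zero_of_row_eq (Ne.symm hi)
        rw [updateRow_self, updateRow_ne (Ne.symm hi), updateRow_self]
      rw [h1, h2, mul_zero]
    have : M.det = 0 := by
      rw [hMeq, det_updateRow_smul, hcomm, hzero, mul_zero]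
    rw [this]
  · push_neg at hA
    -- row reduction on the transpose: subtract row 0 from all other rows
    rw [← Matrix.det_transpose]
    set N : Matrix (Fin (k + 1)) (Fin (k + 1)) ℝ :=
      Matrix.of (fun i j => if i = 0 then Mᵀ 0 j else Mᵀ i j - Mᵀ 0 j) with hN
    have hdet : Mᵀ.det = N.det := by
      apply det_eq_of_forall_row_eq_smul_add_const
        (fun i => if i = (0 : Fin (k+1)) then (0:ℝ) else 1) 0 (by simp)
      intro a b
      rcases eq_or_ne a 0 with rfl | ha0
      · simp [hN]
      · simp only [hN, Matrix.of_apply, if_neg ha0, if_true, eq_self_iff_true]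
        ring
    rw [hdet, det_succ_column_zero, Fin.sum_univ_succ]
    have hcol : ∀ i : Fin k, N i.succ 0 = 0 := by
      intro i
      have h1 : Mᵀ i.succ 0 = x 0 := by
        simp only [hM, Matrix.transpose_apply, Matrix.of_apply]
        exact min_eq_left (h0.trans (hy (Fin.zero_le i.succ)))
      have h2 : Mᵀ 0 0 = x 0 := by
        simp only [hM, Matrix.transpose_apply, Matrix.of_apply]
        exact min_eq_left h0
      simp only [hN, Matrix.of_apply, if_neg (Fin.succ_ne_zero i), h1, h2, sub_self]
    rw [Finset.sum_eq_zero (fun i _ => by rw [hcol i, mul_zero, zero_mul]), add_zero]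
    have hN00 : N 0 0 = x 0 := by
      simp only [hN, Matrix.of_apply, if_pos rfl, Matrix.transpose_apply]
      exact min_eq_left h0
    simp only [Fin.val_zero, pow_zero, one_mul, hN00, Fin.succAbove_zero]
    apply mul_nonneg (hx0 0)
    have hsub : N.submatrix Fin.succ Fin.succ
        = Matrix.of fun i j => min (y i.succ - y 0) (x j.succ - y 0) := by
      ext a b
      have hxb : y 0 < x b.succ := hA b.succ (Fin.succ_ne_zero b)
      simp only [Matrix.submatrix_apply, hN, Matrix.of_apply,
        if_neg (Fin.succ_ne_zero a), Matrix.transpose_apply, hM]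
      rw [min_eq_right hxb.le, min_comm (x b.succ), min_sub_sub_right]
    rw [hsub]
    apply ih _ _ ?_ ?_ ?_ ?_
    · exact fun a b hab => by simpa using sub_le_sub_right (hy (Fin.succ_le_succ_iff.mpr hab)) (y 0)
    · exact fun a b hab => by simpa using sub_le_sub_right (hx (Fin.succ_le_succ_iff.mpr hab)) (y 0)
    · exact fun i => sub_nonneg.mpr (hy (Fin.zero_le i.succ))
    · exact fun j => sub_nonneg.mpr (hA j.succ (Fin.succ_ne_zero j)).le

private lemma min_det_nonneg : ∀ (k : ℕ) (x y : Fin k → ℝ), Monotone x → Monotone y →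
    (∀ i, 0 ≤ x i) → (∀ i, 0 ≤ y i) →
    0 ≤ (Matrix.of fun i j => min (x i) (y j)).det := by
  intro k
  induction k with
  | zero => intro x y _ _ _ _; simp [Matrix.det_fin_zero]
  | succ k ih =>
    intro x y hx hy hx0 hy0
    rcases le_total (x 0) (y 0) with h | h
    · exact min_step k ih x y hx hy hx0 hy0 h
    · rw [← Matrix.det_transpose]
      have : (Matrix.of fun i j => min (x i) (y j))ᵀ
          = Matrix.of fun i j => min (y i) (x j) := by
        ext a b; simp [min_comm]
      rw [this]
      exact min_step k ih y x hy hx hy0 hx0 h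

/-- A real matrix is totally nonnegative if every square minor is nonnegative. -/
def TotallyNonneg {n : ℕ} (A : Matrix (Fin n) (Fin n) ℝ) : Prop :=
  ∀ (k : ℕ) (r c : Fin k → Fin n), StrictMono r → StrictMono c →
    0 ≤ (A.submatrix r c).det

theorem green_matrix_TN (n : ℕ) (p q : Fin n → ℝ)
    (hp : ∀ i, 0 < p i) (hq : ∀ i, 0 < q i)
    (hratio : ∀ i j : Fin n, i ≤ j → p i / q i ≤ p j / q j)
    (A : Matrix (Fin n) (Fin n) ℝ)
    (hA : ∀ i j, A i j = p (min i j) * q (max i j)) :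
    TotallyNonneg A := by
  intro k r c hr hc
  set x : Fin k → ℝ := fun i => p (r i) / q (r i) with hxdef
  set y : Fin k → ℝ := fun j => p (c j) / q (c j) with hydef
  have hentry : A.submatrix r c
      = Matrix.of fun i j => q (r i) *
          ((Matrix.of fun i j => q (c j) *
            ((Matrix.of fun i j => min (x i) (y j)) i j)) i j) := by
    ext i j
    simp only [Matrix.submatrix_apply, Matrix.of_apply, hA]
    rcases le_total (r i) (c j) with h | h
    · rw [min_eq_left h, max_eq_right h, min_eq_left (hratio _ _ h)]
      field_simp [hxdef]
      rw [eq_div_iff (hq _).ne']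
    · rw [min_eq_right h, max_eq_left h, min_eq_right (hratio _ _ h)]
      field_simp [hydef]
      rw [eq_div_iff (hq _).ne']
  rw [hentry, Matrix.det_mul_column, Matrix.det_mul_row]
  have hmin : 0 ≤ (Matrix.of fun i j => min (x i) (y j)).det := by
    apply min_det_nonneg
    · exact fun a b hab => hratio _ _ (hr.monotone hab)
    · exact fun a b hab => hratio _ _ (hc.monotone hab)
    · exact fun i => (div_pos (hp _) (hq _)).le
    · exact fun j => (div_pos (hp _) (hq _)).le
  have h1 : 0 ≤ ∏ i, q (r i) := Finset.prod_nonneg fun i _ => (hq _).le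
  have h2 : 0 ≤ ∏ j, q (c j) := Finset.prod_nonneg fun j _ => (hq _).le
  positivity
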